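/- Let N ≥ 1, let β be a real number, and let x ∈ ℝ^N satisfy 0 < x_i − x_j < π for all 1 ≤ j < i ≤ N (so that sin(x_i − x_j) > 0 for all i ≠ j). Define Ψ : U → ℝ on a neighbourhood U of x by Ψ(y) = Π_{1 ≤ j < i ≤ N} sin(x_i − x_j replaced by y_i − y_j)^β, i.e. Ψ(y) = Π_{j<i} (sin(y_i − y_j))^β. Then −(1/2) Σ_{k=1}^{N} ∂_k² Ψ(x) + ( Σ_{1 ≤ i < j ≤ N} β(β−1)/sin²(x_i − x_j) ) Ψ(x) = (β² N(N²−1)/6) Ψ(x). In other words, Ψ is an eigenfunction of the Calogero–Sutherland Hamiltonian H_CS = −(1/2) Σ_k ∂_k² + Σ_{i<j} β(β−1)/sin²(x_i − x_j) with eigenvalue β² N(N²−1)/6. -/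

import Mathlib

open Finset

noncomputable section CSaux

def Upos (N : ℕ) : Set (Fin N → ℝ) := {y | ∀ i j : Fin N, j < i → 0 < Real.sin (y i - y j)}

lemma isOpen_Upos (N : ℕ) : IsOpen (Upos N) := by
  have h : Upos N = ⋂ i : Fin N, ⋂ j : Fin N,
      {y : Fin N → ℝ | j < i → 0 < Real.sin (y i - y j)} := by
    ext y; simp [Upos, Set.mem_iInter]
  rw [h]
  refine isOpen_iInter_of_finite fun i => isOpen_iInter_of_finite fun j => ?_
  by_cases hji : j < i
  · have hc : Continuous fun y : Fin N → ℝ => Real.sin (y i - y j) :=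
      Real.continuous_sin.comp ((continuous_apply i).sub (continuous_apply j))
    have : IsOpen {y : Fin N → ℝ | 0 < Real.sin (y i - y j)} :=
      isOpen_lt continuous_const hc
    convert this using 1
    ext y; simp [hji]
  · have : {y : Fin N → ℝ | j < i → 0 < Real.sin (y i - y j)} = Set.univ := by
      ext y; simp [hji]
    rw [this]; exact isOpen_univ

def prL {N : ℕ} (i : Fin N) : (Fin N → ℝ) →L[ℝ] ℝ := ContinuousLinearMap.proj i

lemma hasFDerivAt_diff {N : ℕ} (i j : Fin N) (y : Fin N → ℝ) :
    HasFDerivAt (fun y : Fin N → ℝ => y i - y j) (prL i - prL j) y := by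
  exact ((prL i).hasFDerivAt).sub ((prL j).hasFDerivAt)

def Phi (N : ℕ) (β : ℝ) (y : Fin N → ℝ) : ℝ :=
  Real.exp (β * ∑ i : Fin N, ∑ j ∈ univ.filter (fun j => j < i), Real.log (Real.sin (y i - y j)))

def Dmap (N : ℕ) (β : ℝ) (y : Fin N → ℝ) : (Fin N → ℝ) →L[ℝ] ℝ :=
  ∑ i : Fin N, ∑ j ∈ univ.filter (fun j => j < i),
    (β * (Real.cos (y i - y j) / Real.sin (y i - y j))) • (prL i - prL j)

lemma prod_eq_phi {N : ℕ} (β : ℝ) {y : Fin N → ℝ} (hy : y ∈ Upos N) :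
    (∏ i : Fin N, ∏ j ∈ univ.filter (fun j => j < i), Real.sin (y i - y j) ^ β)
      = Phi N β y := by
  have step1 : (∏ i : Fin N, ∏ j ∈ univ.filter (fun j => j < i), Real.sin (y i - y j) ^ β)
      = ∏ i : Fin N, ∏ j ∈ univ.filter (fun j => j < i),
          Real.exp (Real.log (Real.sin (y i - y j)) * β) := by
    refine Finset.prod_congr rfl fun i _ => Finset.prod_congr rfl fun j hj => ?_
    exact Real.rpow_def_of_pos (hy i j (by simpa using hj)) β
  rw [step1, Phi]
  rw [show (β * ∑ i : Fin N, ∑ j ∈ univ.filter (fun j => j < i), Real.log (Real.sin (y i - y j)))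
      = ∑ i : Fin N, ∑ j ∈ univ.filter (fun j => j < i), Real.log (Real.sin (y i - y j)) * β by
    rw [Finset.mul_sum]; refine Finset.sum_congr rfl fun i _ => ?_
    rw [Finset.mul_sum]; refine Finset.sum_congr rfl fun j _ => mul_comm _ _]
  rw [Real.exp_sum]
  exact Finset.prod_congr rfl fun i _ => (Real.exp_sum _ _).symm

lemma hasFDerivAt_Phi {N : ℕ} (β : ℝ) {y : Fin N → ℝ} (hy : y ∈ Upos N) :
    HasFDerivAt (Phi N β) (Phi N β y • Dmap N β y) y := by
  have hsum : HasFDerivAt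
      (fun y : Fin N → ℝ => ∑ i : Fin N, ∑ j ∈ univ.filter (fun j => j < i),
        Real.log (Real.sin (y i - y j)))
      (∑ i : Fin N, ∑ j ∈ univ.filter (fun j => j < i),
        (Real.cos (y i - y j) / Real.sin (y i - y j)) • (prL i - prL j)) y := by
    refine HasFDerivAt.fun_sum fun i _ => HasFDerivAt.fun_sum fun j hj => ?_
    have hsin : Real.sin (y i - y j) ≠ 0 := ne_of_gt (hy i j (by simpa using hj))
    have hls : HasDerivAt (fun t => Real.log (Real.sin t))
        ((Real.sin (y i - y j))⁻¹ * Real.cos (y i - y j)) (y i - y j) :=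
      (Real.hasDerivAt_log hsin).comp _ (Real.hasDerivAt_sin _)
    have h := hls.comp_hasFDerivAt y (hasFDerivAt_diff i j y)
    rw [div_eq_inv_mul]
    exact h
  have hg : HasFDerivAt
      (fun y : Fin N → ℝ => β * ∑ i : Fin N, ∑ j ∈ univ.filter (fun j => j < i),
        Real.log (Real.sin (y i - y j))) (Dmap N β y) y := by
    have h := hsum.const_mul β
    refine h.congr_fderiv (Eq.symm ?_)
    rw [Dmap, Finset.smul_sum]
    refine Finset.sum_congr rfl fun i _ => ?_
    rw [Finset.smul_sum]
    refine Finset.sum_congr rfl fun j _ => (smul_smul _ _ _).symm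
  exact (Real.hasDerivAt_exp _).comp_hasFDerivAt y hg

end CSaux

noncomputable section CSaux2
open Finset

def ee {N : ℕ} (i k : Fin N) : ℝ := if i = k then 1 else 0

def Gfun (N : ℕ) (β : ℝ) (k : Fin N) (y : Fin N → ℝ) : ℝ :=
  ∑ i : Fin N, ∑ j ∈ univ.filter (fun j => j < i),
    (β * (ee i k - ee j k)) * (Real.cos (y i - y j) / Real.sin (y i - y j))

def Efun (N : ℕ) (β : ℝ) (k : Fin N) (x : Fin N → ℝ) : ℝ :=
  ∑ i : Fin N, ∑ j ∈ univ.filter (fun j => j < i),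
    (β * (ee i k - ee j k)) * (-(1 / Real.sin (x i - x j) ^ 2) * (ee i k - ee j k))

lemma Dmap_apply_single {N : ℕ} (β : ℝ) (y : Fin N → ℝ) (k : Fin N) :
    Dmap N β y (Pi.single k 1) = Gfun N β k y := by
  rw [Dmap, Gfun]
  rw [ContinuousLinearMap.sum_apply]
  refine Finset.sum_congr rfl fun i _ => ?_
  rw [ContinuousLinearMap.sum_apply]
  refine Finset.sum_congr rfl fun j _ => ?_
  rw [ContinuousLinearMap.smul_apply, ContinuousLinearMap.sub_apply]
  simp only [prL, ContinuousLinearMap.proj_apply, Pi.single_apply, ee]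
  simp only [smul_eq_mul]
  ring

lemma hasFDerivAt_Gfun {N : ℕ} (β : ℝ) (k : Fin N) {x : Fin N → ℝ} (hx : x ∈ Upos N) :
    HasFDerivAt (Gfun N β k)
      (∑ i : Fin N, ∑ j ∈ univ.filter (fun j => j < i),
        (β * (ee i k - ee j k)) • ((-(1 / Real.sin (x i - x j) ^ 2)) • (prL i - prL j))) x := by
  show HasFDerivAt (fun y : Fin N → ℝ => ∑ i : Fin N, ∑ j ∈ univ.filter (fun j => j < i),
    (β * (ee i k - ee j k)) * (Real.cos (y i - y j) / Real.sin (y i - y j))) _ _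
  refine HasFDerivAt.fun_sum fun i _ => HasFDerivAt.fun_sum fun j hj => ?_
  have hsin : Real.sin (x i - x j) ≠ 0 := ne_of_gt (hx i j (by simpa using hj))
  have hcot : HasDerivAt (fun t => Real.cos t / Real.sin t)
      (-(1 / Real.sin (x i - x j) ^ 2)) (x i - x j) := by
    have h := (Real.hasDerivAt_cos (x i - x j)).div (Real.hasDerivAt_sin (x i - x j)) hsin
    refine h.congr_deriv ?_
    have hpy : Real.sin (x i - x j) ^ 2 + Real.cos (x i - x j) ^ 2 = 1 :=
      Real.sin_sq_add_cos_sq _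
    field_simp
    nlinarith [hpy]
  have h := (hcot.comp_hasFDerivAt x (hasFDerivAt_diff i j x)).const_mul (β * (ee i k - ee j k))
  exact h

lemma fderiv2_eq {N : ℕ} (β : ℝ) {x : Fin N → ℝ} (hxU : x ∈ Upos N)
    (Ψ : (Fin N → ℝ) → ℝ)
    (hΨ : ∀ y : Fin N → ℝ,
      Ψ y = ∏ i : Fin N, ∏ j ∈ univ.filter (fun j => j < i), Real.sin (y i - y j) ^ β)
    (k : Fin N) :
    fderiv ℝ (fun y => fderiv ℝ Ψ y (Pi.single k 1)) x (Pi.single k 1)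
      = Ψ x * ((Gfun N β k x) ^ 2 + Efun N β k x) := by
  have hUnhds : Upos N ∈ nhds x := (isOpen_Upos N).mem_nhds hxU
  have hPsiPhi : ∀ y ∈ Upos N, Ψ y = Phi N β y := fun y hy => by
    rw [hΨ y]; exact prod_eq_phi β hy
  -- Ψ has derivative Phi y • Dmap y at every y ∈ U
  have hD : ∀ y ∈ Upos N, HasFDerivAt Ψ (Phi N β y • Dmap N β y) y := by
    intro y hy
    refine (hasFDerivAt_Phi β hy).congr_of_eventuallyEq ?_
    filter_upwards [(isOpen_Upos N).mem_nhds hy] with z hz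
    exact hPsiPhi z hz
  -- the first-derivative function agrees with Phi * Gfun near x
  have hev : (fun y => fderiv ℝ Ψ y (Pi.single k 1)) =ᶠ[nhds x]
      (fun y => Phi N β y * Gfun N β k y) := by
    filter_upwards [hUnhds] with y hy
    rw [(hD y hy).fderiv]
    rw [ContinuousLinearMap.smul_apply, Dmap_apply_single]
    simp [smul_eq_mul]
  rw [hev.fderiv_eq]
  have hmul : HasFDerivAt (fun y => Phi N β y * Gfun N β k y)
      (Phi N β x • (∑ i : Fin N, ∑ j ∈ univ.filter (fun j => j < i),
          (β * (ee i k - ee j k)) • ((-(1 / Real.sin (x i - x j) ^ 2)) • (prL i - prL j)))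
        + Gfun N β k x • (Phi N β x • Dmap N β x)) x :=
    (hasFDerivAt_Phi β hxU).mul (hasFDerivAt_Gfun β k hxU)
  rw [hmul.fderiv]
  rw [ContinuousLinearMap.add_apply, ContinuousLinearMap.smul_apply,
    ContinuousLinearMap.smul_apply, ContinuousLinearMap.smul_apply, Dmap_apply_single]
  have hval : (∑ i : Fin N, ∑ j ∈ univ.filter (fun j => j < i),
      (β * (ee i k - ee j k)) • ((-(1 / Real.sin (x i - x j) ^ 2)) • (prL i - prL j)))
        (Pi.single k 1) = Efun N β k x := by
    rw [ContinuousLinearMap.sum_apply, Efun]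
    refine Finset.sum_congr rfl fun i _ => ?_
    rw [ContinuousLinearMap.sum_apply]
    refine Finset.sum_congr rfl fun j _ => ?_
    rw [ContinuousLinearMap.smul_apply, ContinuousLinearMap.smul_apply,
      ContinuousLinearMap.sub_apply]
    simp only [prL, ContinuousLinearMap.proj_apply, Pi.single_apply, ee, smul_eq_mul]
  rw [hval, ← hPsiPhi x hxU]
  simp only [smul_eq_mul]
  ring

end CSaux2

section CSalg
open Finset

variable {N : ℕ}

lemma swap_lt_sum (g : Fin N → Fin N → ℝ) :
    ∑ i : Fin N, ∑ j ∈ univ.filter (fun j => j < i), g i j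
      = ∑ i : Fin N, ∑ j ∈ univ.filter (fun j => i < j), g j i := by
  have h1 : ∀ i : Fin N, ∑ j ∈ univ.filter (fun j => j < i), g i j
      = ∑ j : Fin N, if j < i then g i j else 0 := fun i => by
    rw [Finset.sum_filter]
  have h2 : ∀ i : Fin N, ∑ j ∈ univ.filter (fun j => i < j), g j i
      = ∑ j : Fin N, if i < j then g j i else 0 := fun i => by
    rw [Finset.sum_filter]
  simp only [h1, h2]
  rw [Finset.sum_comm]

lemma delta_sum_fst (g : Fin N → Fin N → ℝ) (k : Fin N) :
    ∑ i : Fin N, ∑ j ∈ univ.filter (fun j => j < i), g i j * (if i = k then (1:ℝ) else 0)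
      = ∑ j ∈ univ.filter (fun j => j < k), g k j := by
  have h : ∀ i : Fin N, ∑ j ∈ univ.filter (fun j => j < i), g i j * (if i = k then (1:ℝ) else 0)
      = if i = k then ∑ j ∈ univ.filter (fun j => j < i), g i j else 0 := fun i => by
    by_cases hik : i = k <;> simp [hik]
  simp only [h]
  rw [Finset.sum_ite_eq' univ k]
  simp

lemma delta_sum_snd (g : Fin N → Fin N → ℝ) (k : Fin N) :
    ∑ i : Fin N, ∑ j ∈ univ.filter (fun j => j < i), g i j * (if j = k then (1:ℝ) else 0)
      = ∑ i ∈ univ.filter (fun i => k < i), g i k := by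
  rw [swap_lt_sum (fun i j => g i j * (if j = k then (1:ℝ) else 0))]
  have h : ∀ i : Fin N, ∑ j ∈ univ.filter (fun j => i < j), g j i * (if i = k then (1:ℝ) else 0)
      = if i = k then ∑ j ∈ univ.filter (fun j => i < j), g j i else 0 := fun i => by
    by_cases hik : i = k <;> simp [hik]
  simp only [h]
  rw [Finset.sum_ite_eq' univ k]
  simp

lemma erase_split (h : Fin N → ℝ) (k : Fin N) :
    ∑ j ∈ univ.erase k, h j
      = (∑ j ∈ univ.filter (fun j => j < k), h j) + ∑ j ∈ univ.filter (fun j => k < j), h j := by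
  rw [← Finset.sum_filter_add_sum_filter_not (univ.erase k) (fun j => j < k)]
  congr 1
  · congr 1
    ext j
    simp only [Finset.mem_filter, Finset.mem_erase, Finset.mem_univ, true_and, and_true]
    constructor
    · rintro ⟨-, h2⟩; exact h2
    · intro h2; exact ⟨ne_of_lt h2, h2⟩
  · congr 1
    ext j
    simp only [Finset.mem_filter, Finset.mem_erase, Finset.mem_univ, true_and, and_true]
    constructor
    · rintro ⟨h1, h2⟩; exact lt_of_le_of_ne (not_lt.mp h2) (Ne.symm h1)
    · intro h2; exact ⟨(ne_of_lt h2).symm, not_lt.mpr (le_of_lt h2)⟩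

lemma ct_neg (a : ℝ) : Real.cos (-a) / Real.sin (-a) = -(Real.cos a / Real.sin a) := by
  rw [Real.cos_neg, Real.sin_neg, div_neg]

lemma Gfun_eq (β : ℝ) (k : Fin N) (x : Fin N → ℝ) :
    Gfun N β k x = β * ∑ j ∈ univ.erase k,
      Real.cos (x k - x j) / Real.sin (x k - x j) := by
  have hterm : ∀ i j : Fin N,
      (β * (ee i k - ee j k)) * (Real.cos (x i - x j) / Real.sin (x i - x j))
        = β * ((Real.cos (x i - x j) / Real.sin (x i - x j)) * (if i = k then (1:ℝ) else 0)
            - (Real.cos (x i - x j) / Real.sin (x i - x j)) * (if j = k then (1:ℝ) else 0)) := by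
    intro i j; simp only [ee]; ring
  rw [Gfun]
  simp only [hterm]
  simp only [← Finset.mul_sum]
  congr 1
  rw [show (∑ i : Fin N, ∑ j ∈ univ.filter (fun j => j < i),
      ((Real.cos (x i - x j) / Real.sin (x i - x j)) * (if i = k then (1:ℝ) else 0)
        - (Real.cos (x i - x j) / Real.sin (x i - x j)) * (if j = k then (1:ℝ) else 0)))
    = (∑ i : Fin N, ∑ j ∈ univ.filter (fun j => j < i),
        (Real.cos (x i - x j) / Real.sin (x i - x j)) * (if i = k then (1:ℝ) else 0))
      - ∑ i : Fin N, ∑ j ∈ univ.filter (fun j => j < i),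
        (Real.cos (x i - x j) / Real.sin (x i - x j)) * (if j = k then (1:ℝ) else 0) by
    rw [← Finset.sum_sub_distrib]
    exact Finset.sum_congr rfl fun i _ => by rw [← Finset.sum_sub_distrib]]
  rw [delta_sum_fst (fun i j => Real.cos (x i - x j) / Real.sin (x i - x j)) k,
      delta_sum_snd (fun i j => Real.cos (x i - x j) / Real.sin (x i - x j)) k]
  rw [erase_split, sub_eq_add_neg]
  congr 1
  rw [← Finset.sum_neg_distrib]
  refine Finset.sum_congr rfl fun i _ => ?_
  rw [show x i - x k = -(x k - x i) by ring, ct_neg, neg_neg]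

lemma Efun_eq (β : ℝ) (k : Fin N) (x : Fin N → ℝ) :
    Efun N β k x = -(β * ∑ j ∈ univ.erase k, 1 / Real.sin (x k - x j) ^ 2) := by
  have hterm : ∀ i j : Fin N, j < i →
      (β * (ee i k - ee j k)) * (-(1 / Real.sin (x i - x j) ^ 2) * (ee i k - ee j k))
        = -β * ((1 / Real.sin (x i - x j) ^ 2) * (if i = k then (1:ℝ) else 0)
            + (1 / Real.sin (x i - x j) ^ 2) * (if j = k then (1:ℝ) else 0)) := by
    intro i j hlt
    simp only [ee]
    rcases eq_or_ne i k with rfl | h1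
    · have h2 : j ≠ i := ne_of_lt hlt
      simp [h2]
    · rcases eq_or_ne j k with rfl | h2
      · simp [h1]
      · simp [h1, h2]
  rw [Efun]
  rw [Finset.sum_congr rfl fun i _ => Finset.sum_congr rfl fun j hj =>
    hterm i j (by simpa using hj)]
  simp only [← Finset.mul_sum]
  rw [neg_mul, neg_inj]
  congr 1
  rw [show (∑ i : Fin N, ∑ j ∈ univ.filter (fun j => j < i),
      ((1 / Real.sin (x i - x j) ^ 2) * (if i = k then (1:ℝ) else 0)
        + (1 / Real.sin (x i - x j) ^ 2) * (if j = k then (1:ℝ) else 0)))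
    = (∑ i : Fin N, ∑ j ∈ univ.filter (fun j => j < i),
        (1 / Real.sin (x i - x j) ^ 2) * (if i = k then (1:ℝ) else 0))
      + ∑ i : Fin N, ∑ j ∈ univ.filter (fun j => j < i),
        (1 / Real.sin (x i - x j) ^ 2) * (if j = k then (1:ℝ) else 0) by
    rw [← Finset.sum_add_distrib]
    exact Finset.sum_congr rfl fun i _ => by rw [← Finset.sum_add_distrib]]
  rw [delta_sum_fst (fun i j => 1 / Real.sin (x i - x j) ^ 2) k,
      delta_sum_snd (fun i j => 1 / Real.sin (x i - x j) ^ 2) k]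
  rw [erase_split]
  congr 1
  refine Finset.sum_congr rfl fun i _ => ?_
  rw [show x k - x i = -(x i - x k) by ring, Real.sin_neg]
  ring

end CSalg

section CStriple
open Finset

variable {N : ℕ}

lemma cot_triple (a b : ℝ) (ha : Real.sin a ≠ 0) (hb : Real.sin b ≠ 0)
    (hab : Real.sin (a + b) ≠ 0) :
    (Real.cos a / Real.sin a) * (Real.cos b / Real.sin b)
      + (Real.cos b / Real.sin b) * (Real.cos (-(a+b)) / Real.sin (-(a+b)))
      + (Real.cos (-(a+b)) / Real.sin (-(a+b))) * (Real.cos a / Real.sin a) = 1 := by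
  rw [Real.sin_neg, Real.cos_neg]
  field_simp
  rw [Real.sin_add, Real.cos_add]
  ring

lemma ct_sq (a : ℝ) (ha : Real.sin a ≠ 0) :
    (Real.cos a / Real.sin a) ^ 2 = 1 / Real.sin a ^ 2 - 1 := by
  rw [div_pow, Real.cos_sq']
  field_simp

lemma triple_value (x : Fin N → ℝ) (hne : ∀ i j : Fin N, i ≠ j → Real.sin (x i - x j) ≠ 0)
    (k j l : Fin N) (hkj : k ≠ j) (hkl : k ≠ l) (hjl : j ≠ l) :
    (Real.cos (x k - x j) / Real.sin (x k - x j)) * (Real.cos (x k - x l) / Real.sin (x k - x l))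
    + (Real.cos (x j - x l) / Real.sin (x j - x l)) * (Real.cos (x j - x k) / Real.sin (x j - x k))
    + (Real.cos (x l - x k) / Real.sin (x l - x k)) * (Real.cos (x l - x j) / Real.sin (x l - x j))
      = -1 := by
  have h1 : Real.sin (x k - x j) ≠ 0 := hne k j hkj
  have h2 : Real.sin (x j - x l) ≠ 0 := hne j l hjl
  have h3 : Real.sin ((x k - x j) + (x j - x l)) ≠ 0 := by
    rw [show (x k - x j) + (x j - x l) = x k - x l by ring]
    exact hne k l hkl
  have key := cot_triple (x k - x j) (x j - x l) h1 h2 h3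
  rw [show (x k - x j) + (x j - x l) = x k - x l by ring] at key
  rw [show x j - x k = -(x k - x j) by ring, ct_neg]
  rw [show x l - x k = -(x k - x l) by ring, ct_neg]
  rw [show x l - x j = -((x j - x l)) by ring, ct_neg]
  rw [ct_neg] at key
  linear_combination (-1 : ℝ) * key

def Dtriple (N : ℕ) : Finset (Fin N × Fin N × Fin N) :=
  univ.filter (fun p => p.1 ≠ p.2.1 ∧ p.1 ≠ p.2.2 ∧ p.2.1 ≠ p.2.2)

lemma triple_sum_eq (F : Fin N → Fin N → Fin N → ℝ) :
    ∑ p ∈ Dtriple N, F p.1 p.2.1 p.2.2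
      = ∑ k : Fin N, ∑ j ∈ univ.erase k, ∑ l ∈ (univ.erase k).erase j, F k j l := by
  rw [Dtriple, Finset.sum_filter, Fintype.sum_prod_type]
  refine Finset.sum_congr rfl fun k _ => ?_
  rw [Fintype.sum_prod_type]
  have hinner : ∀ j : Fin N,
      (∑ l : Fin N, if k ≠ j ∧ k ≠ l ∧ j ≠ l then F k j l else 0)
        = if j ≠ k then ∑ l ∈ (univ.erase k).erase j, F k j l else 0 := by
    intro j
    by_cases hjk : j = k
    · subst hjk
      simp
    · have hkj : k ≠ j := Ne.symm hjk
      rw [if_pos hjk]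
      rw [show ((univ.erase k).erase j) = univ.filter (fun l => k ≠ l ∧ j ≠ l) by
        ext l
        simp only [Finset.mem_filter, Finset.mem_erase, Finset.mem_univ, true_and, and_true]
        constructor
        · rintro ⟨h1, h2⟩; exact ⟨Ne.symm h2, Ne.symm h1⟩
        · rintro ⟨h1, h2⟩; exact ⟨Ne.symm h2, Ne.symm h1⟩]
      rw [Finset.sum_filter]
      refine Finset.sum_congr rfl fun l _ => ?_
      by_cases h : k ≠ l ∧ j ≠ l
      · rw [if_pos h, if_pos ⟨hkj, h.1, h.2⟩]
      · rw [if_neg h, if_neg (by tauto)]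
  simp only [hinner]
  rw [← Finset.sum_filter, Finset.filter_ne']

lemma rot_sum (f : Fin N × Fin N × Fin N → ℝ) :
    ∑ p ∈ Dtriple N, f p = ∑ p ∈ Dtriple N, f (p.2.1, p.2.2, p.1) := by
  refine Finset.sum_nbij' (i := fun p => (p.2.2, p.1, p.2.1))
    (j := fun p => (p.2.1, p.2.2, p.1)) ?_ ?_ ?_ ?_ ?_
  · intro p hp; simp only [Dtriple, Finset.mem_filter, Finset.mem_univ, true_and] at hp ⊢; tauto
  · intro p hp; simp only [Dtriple, Finset.mem_filter, Finset.mem_univ, true_and] at hp ⊢; tauto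
  · intro p _; rfl
  · intro p _; rfl
  · intro p _; rfl

end CStriple

theorem CS_ground_state_eigenfunction (N : ℕ) (hN : 1 ≤ N) (β : ℝ) (x : Fin N → ℝ)
    (hx : ∀ i j : Fin N, j < i → 0 < x i - x j ∧ x i - x j < Real.pi)
    (Ψ : (Fin N → ℝ) → ℝ)
    (hΨ : ∀ y : Fin N → ℝ,
      Ψ y = ∏ i : Fin N, ∏ j ∈ univ.filter (fun j => j < i), Real.sin (y i - y j) ^ β) :
    -(1 / 2) * ∑ k : Fin N,
        fderiv ℝ (fun y => fderiv ℝ Ψ y (Pi.single k 1)) x (Pi.single k 1)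
      + (∑ i : Fin N, ∑ j ∈ univ.filter (fun j => i < j),
          β * (β - 1) / Real.sin (x i - x j) ^ 2) * Ψ x
      = β ^ 2 * (N : ℝ) * ((N : ℝ) ^ 2 - 1) / 6 * Ψ x := by
  have hxU : x ∈ Upos N := fun i j h =>
    Real.sin_pos_of_pos_of_lt_pi (hx i j h).1 (hx i j h).2
  have hne : ∀ i j : Fin N, i ≠ j → Real.sin (x i - x j) ≠ 0 := by
    intro i j hij
    rcases lt_or_gt_of_ne hij with h | h
    · rw [show x i - x j = -(x j - x i) by ring, Real.sin_neg]
      exact neg_ne_zero.mpr (ne_of_gt (hxU j i h))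
    · exact ne_of_gt (hxU i j h)
  rw [Finset.sum_congr rfl fun k _ => fderiv2_eq β hxU Ψ hΨ k]
  simp only [Gfun_eq, Efun_eq]
  -- scalar identity
  have key : -(1/2 : ℝ) * (∑ k : Fin N,
        ((β * ∑ j ∈ univ.erase k, Real.cos (x k - x j) / Real.sin (x k - x j)) ^ 2
          + -(β * ∑ j ∈ univ.erase k, 1 / Real.sin (x k - x j) ^ 2)))
      + (∑ i : Fin N, ∑ j ∈ univ.filter (fun j => i < j),
          β * (β - 1) / Real.sin (x i - x j) ^ 2)
      = β ^ 2 * (N : ℝ) * ((N : ℝ) ^ 2 - 1) / 6 := by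
    have hsymq : ∀ i j : Fin N, 1 / Real.sin (x j - x i) ^ 2 = 1 / Real.sin (x i - x j) ^ 2 := by
      intro i j
      rw [show x j - x i = -(x i - x j) by ring, Real.sin_neg, neg_pow]
      simp
    -- Q = 2 W
    have hQ2 : (∑ k : Fin N, ∑ j ∈ univ.erase k, 1 / Real.sin (x k - x j) ^ 2)
        = 2 * ∑ i : Fin N, ∑ j ∈ univ.filter (fun j => i < j), 1 / Real.sin (x i - x j) ^ 2 := by
      rw [Finset.sum_congr rfl fun k (_ : k ∈ univ) =>
        erase_split (fun j => 1 / Real.sin (x k - x j) ^ 2) k]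
      rw [Finset.sum_add_distrib]
      rw [swap_lt_sum (fun i j => 1 / Real.sin (x i - x j) ^ 2)]
      rw [show (∑ i : Fin N, ∑ j ∈ univ.filter (fun j => i < j), 1 / Real.sin (x j - x i) ^ 2)
          = ∑ i : Fin N, ∑ j ∈ univ.filter (fun j => i < j), 1 / Real.sin (x i - x j) ^ 2 from
        Finset.sum_congr rfl fun i _ => Finset.sum_congr rfl fun j _ => hsymq i j]
      ring
    -- V = β (β-1) W
    have hV : (∑ i : Fin N, ∑ j ∈ univ.filter (fun j => i < j),
          β * (β - 1) / Real.sin (x i - x j) ^ 2)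
        = β * (β - 1) * ∑ i : Fin N, ∑ j ∈ univ.filter (fun j => i < j),
            1 / Real.sin (x i - x j) ^ 2 := by
      rw [Finset.mul_sum]
      refine Finset.sum_congr rfl fun i _ => ?_
      rw [Finset.mul_sum]
      refine Finset.sum_congr rfl fun j _ => ?_
      rw [mul_one_div]
    -- expansion of squares
    have hsq : ∀ k : Fin N,
        (∑ j ∈ univ.erase k, Real.cos (x k - x j) / Real.sin (x k - x j)) ^ 2
          = (∑ j ∈ univ.erase k, (Real.cos (x k - x j) / Real.sin (x k - x j)) ^ 2)
            + ∑ j ∈ univ.erase k, ∑ l ∈ (univ.erase k).erase j,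
                (Real.cos (x k - x j) / Real.sin (x k - x j))
                  * (Real.cos (x k - x l) / Real.sin (x k - x l)) := by
      intro k
      rw [sq, Finset.sum_mul_sum, ← Finset.sum_add_distrib]
      refine Finset.sum_congr rfl fun j hj => ?_
      rw [← Finset.add_sum_erase _ _ hj]
      congr 1
      rw [sq]
    have hc2 : ∀ k : Fin N, (∑ j ∈ univ.erase k,
          (Real.cos (x k - x j) / Real.sin (x k - x j)) ^ 2)
        = (∑ j ∈ univ.erase k, 1 / Real.sin (x k - x j) ^ 2) - ((N - 1 : ℕ) : ℝ) := by
      intro k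
      rw [Finset.sum_congr rfl fun j hj =>
        ct_sq (x k - x j) (hne k j (Ne.symm (Finset.mem_erase.mp hj).1))]
      rw [Finset.sum_sub_distrib, Finset.sum_const,
        Finset.card_erase_of_mem (Finset.mem_univ k), Finset.card_univ, Fintype.card_fin,
        nsmul_eq_mul, mul_one]
    -- triple sum
    have hT : 3 * (∑ k : Fin N, ∑ j ∈ univ.erase k, ∑ l ∈ (univ.erase k).erase j,
          (Real.cos (x k - x j) / Real.sin (x k - x j))
            * (Real.cos (x k - x l) / Real.sin (x k - x l)))
        = -((N : ℝ) * ((N - 1 : ℕ) : ℝ) * ((N - 1 - 1 : ℕ) : ℝ)) := by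
      rw [← triple_sum_eq (fun k j l => (Real.cos (x k - x j) / Real.sin (x k - x j))
            * (Real.cos (x k - x l) / Real.sin (x k - x l)))]
      have hrot1 := rot_sum (N := N) (fun p => (Real.cos (x p.1 - x p.2.1) / Real.sin (x p.1 - x p.2.1))
            * (Real.cos (x p.1 - x p.2.2) / Real.sin (x p.1 - x p.2.2)))
      have hrot2 := rot_sum (N := N) (fun p => (Real.cos (x p.2.1 - x p.2.2) / Real.sin (x p.2.1 - x p.2.2))
            * (Real.cos (x p.2.1 - x p.1) / Real.sin (x p.2.1 - x p.1)))
      have hcard : (∑ p ∈ Dtriple N, (1:ℝ))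
          = (N : ℝ) * ((N - 1 : ℕ) : ℝ) * ((N - 1 - 1 : ℕ) : ℝ) := by
        rw [triple_sum_eq (fun _ _ _ => (1:ℝ))]
        have h1 : ∀ (k j : Fin N), j ∈ univ.erase k →
            (∑ l ∈ (univ.erase k).erase j, (1:ℝ)) = ((N - 1 - 1 : ℕ) : ℝ) := by
          intro k j hj
          rw [Finset.sum_const, Finset.card_erase_of_mem hj,
            Finset.card_erase_of_mem (Finset.mem_univ k), Finset.card_univ, Fintype.card_fin,
            nsmul_eq_mul, mul_one]
        rw [Finset.sum_congr rfl fun k _ => Finset.sum_congr rfl fun j hj => h1 k j hj]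
        rw [Finset.sum_congr rfl fun k (_ : k ∈ univ) => Finset.sum_const _]
        rw [Finset.sum_congr rfl fun k (_ : k ∈ univ) => by
          rw [Finset.card_erase_of_mem (Finset.mem_univ k), Finset.card_univ, Fintype.card_fin]]
        rw [Finset.sum_const, Finset.card_univ, Fintype.card_fin, nsmul_eq_mul, nsmul_eq_mul]
        ring
      calc 3 * ∑ p ∈ Dtriple N, (Real.cos (x p.1 - x p.2.1) / Real.sin (x p.1 - x p.2.1))
              * (Real.cos (x p.1 - x p.2.2) / Real.sin (x p.1 - x p.2.2))
          = ∑ p ∈ Dtriple N, ((Real.cos (x p.1 - x p.2.1) / Real.sin (x p.1 - x p.2.1))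
              * (Real.cos (x p.1 - x p.2.2) / Real.sin (x p.1 - x p.2.2))
            + ((Real.cos (x p.2.1 - x p.2.2) / Real.sin (x p.2.1 - x p.2.2))
              * (Real.cos (x p.2.1 - x p.1) / Real.sin (x p.2.1 - x p.1))
            + (Real.cos (x p.2.2 - x p.1) / Real.sin (x p.2.2 - x p.1))
              * (Real.cos (x p.2.2 - x p.2.1) / Real.sin (x p.2.2 - x p.2.1)))) := by
            rw [Finset.sum_add_distrib, Finset.sum_add_distrib, ← hrot1, ← hrot2, ← hrot1]
            ring
        _ = ∑ p ∈ Dtriple N, (-1 : ℝ) := by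
            refine Finset.sum_congr rfl fun p hp => ?_
            simp only [Dtriple, Finset.mem_filter, Finset.mem_univ, true_and] at hp
            have := triple_value x hne p.1 p.2.1 p.2.2 hp.1 hp.2.1 hp.2.2
            linarith [this]
        _ = -((N : ℝ) * ((N - 1 : ℕ) : ℝ) * ((N - 1 - 1 : ℕ) : ℝ)) := by
            rw [Finset.sum_const, nsmul_eq_mul, mul_neg_one]
            rw [show (((Dtriple N).card : ℕ) : ℝ) = ∑ p ∈ Dtriple N, (1:ℝ) by
              rw [Finset.sum_const, nsmul_eq_mul, mul_one]]
            rw [hcard]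
    -- cast arithmetic
    have hcast : 3 * ((N : ℝ) * ((N - 1 : ℕ) : ℝ))
        + (N : ℝ) * ((N - 1 : ℕ) : ℝ) * ((N - 1 - 1 : ℕ) : ℝ)
        = (N : ℝ) * ((N : ℝ) ^ 2 - 1) := by
      rcases N with _ | _ | n
      · exact absurd hN (by norm_num)
      · norm_num
      · push_cast [Nat.succ_sub_one]
        ring
    -- assemble
    have hsummand : ∀ k : Fin N,
        (β * ∑ j ∈ univ.erase k, Real.cos (x k - x j) / Real.sin (x k - x j)) ^ 2
          + -(β * ∑ j ∈ univ.erase k, 1 / Real.sin (x k - x j) ^ 2)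
        = β ^ 2 * ((∑ j ∈ univ.erase k, 1 / Real.sin (x k - x j) ^ 2) - ((N - 1 : ℕ) : ℝ))
          + β ^ 2 * (∑ j ∈ univ.erase k, ∑ l ∈ (univ.erase k).erase j,
              (Real.cos (x k - x j) / Real.sin (x k - x j))
                * (Real.cos (x k - x l) / Real.sin (x k - x l)))
          - β * ∑ j ∈ univ.erase k, 1 / Real.sin (x k - x j) ^ 2 := by
      intro k
      rw [mul_pow, hsq k, hc2 k]
      ring
    rw [Finset.sum_congr rfl fun k (_ : k ∈ univ) => hsummand k]
    rw [hV]
    rw [Finset.sum_sub_distrib, Finset.sum_add_distrib]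
    rw [← Finset.mul_sum, ← Finset.mul_sum, ← Finset.mul_sum]
    rw [Finset.sum_sub_distrib, Finset.sum_const, Finset.card_univ, Fintype.card_fin,
      nsmul_eq_mul]
    linear_combination (β/2 - β^2/2) * hQ2 + (-(β^2)/6) * hT + (β^2/6) * hcast
  rw [← Finset.mul_sum]
  linear_combination (Ψ x) * key
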